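/- Fix masses m, M with 2M > m > 0. There exists a constant c > 0, depending only on m and M, with the following property. Let s₁, s₂ ∈ {+1,−1}, let k, k₁, k₂ be nonnegative integers and j, j₁, j₂ integers, and let φ, u₁, u₂ : ℝ × ℝ³ → ℂ be Schwartz functions whose space-time Fourier transforms satisfy: supp φ̂ ⊆ {(τ,ξ) : |ξ| ≤ 2^{k+2}, (k ≥ 1 ⟹ |ξ| ≥ 2^{k−2}), and 2^{j−2} ≤ |τ + ⟨ξ⟩_m| ≤ 2^{j+2}}, and for i = 1,2, supp ûᵢ ⊆ {(τ,ξ) : |ξ| ≤ 2^{kᵢ+2}, (kᵢ ≥ 1 ⟹ |ξ| ≥ 2^{kᵢ−2}), and 2^{jᵢ−2} ≤ |τ + sᵢ⟨ξ⟩_M| ≤ 2^{jᵢ+2}}. If max(j, j₁, j₂) ≤ −min(k, k₁, k₂) − c, then ∫_{ℝ×ℝ³} φ(t,x) u₁(t,x) \overline{u₂(t,x)} dt dx = 0. -/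

import Mathlib

noncomputable section

open MeasureTheory Complex SchwartzMap
open scoped RealInnerProductSpace FourierTransform

/-- Spacetime `ℝ × ℝ³`, realized as `ℝ⁴`, with coordinate `0` playing the role of the
time variable `t` (resp. the frequency `τ`) and coordinates `1,2,3` the space variables. -/
abbrev SpaceTime := EuclideanSpace ℝ (Fin 4)

/-- The spatial part `ξ ∈ ℝ³` of a spacetime frequency `ζ = (τ, ξ)`. -/
def spatial (ζ : SpaceTime) : EuclideanSpace ℝ (Fin 3) := WithLp.toLp 2 (fun i : Fin 3 => ζ i.succ)

/-- The space-time Fourier transform `v̂(ζ) = ∫ e^{−i⟨z,ζ⟫} v(z) dz` (so that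
`v̂(τ,ξ) = ∫ e^{−i(tτ+x·ξ)} v(t,x) dt dx`). -/
def spacetimeFT (v : SpaceTime → ℂ) (ζ : SpaceTime) : ℂ :=
  ∫ z : SpaceTime, Complex.exp (-(Complex.I * ((⟪z, ζ⟫ : ℝ) : ℂ))) * v z

/-- The Japanese bracket `⟨ξ⟩_a := √(|ξ|² + a²)`. -/
def jbracket (a : ℝ) (ξ : EuclideanSpace ℝ (Fin 3)) : ℝ :=
  Real.sqrt (‖ξ‖ ^ 2 + a ^ 2)

/-- The region `{(τ,ξ) : |ξ| ≤ 2^{k+2}, (k ≥ 1 ⟹ |ξ| ≥ 2^{k−2}),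
2^{j−2} ≤ |τ + sgn·⟨ξ⟩_a| ≤ 2^{j+2}}` of spacetime frequencies with spatial frequency
comparable to `2^k` and modulation (relative to the mass-`a`, sign-`sgn` characteristic
hypersurface) comparable to `2^j`. -/
def kgRegion (a sgn : ℝ) (k : ℕ) (j : ℤ) : Set SpaceTime :=
  {ζ | ‖spatial ζ‖ ≤ 2 ^ (k + 2) ∧
    (1 ≤ k → (2 : ℝ) ^ ((k : ℤ) - 2) ≤ ‖spatial ζ‖) ∧
    (2 : ℝ) ^ (j - 2) ≤ |ζ 0 + sgn * jbracket a (spatial ζ)| ∧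
    |ζ 0 + sgn * jbracket a (spatial ζ)| ≤ (2 : ℝ) ^ (j + 2)}

/-- threshold -/
def resX (m M : ℝ) : ℝ := 32*M + m + 8

/-- The resonance constant. -/
def resC (m M : ℝ) : ℝ :=
  min 1 <| min (m^2/(2*resX m M + m)) <| min (m^2/(4+m)) <| min (M^2/(3*(2+M))) <|
    min (M^2/(2*(2+M))) <| min ((4*M^2-m^2)/(2*resX m M + 2*M + m)) ((4*M^2-m^2)/24)

variable {m M : ℝ}

lemma resX_pos (hm : 0 < m) (hM : 0 < M) : 0 < resX m M := by unfold resX; linarith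

lemma resX_ge8 (hm : 0 < m) (hM : 0 < M) : 8 ≤ resX m M := by unfold resX; linarith
lemma resX_geM (hm : 0 < m) (hM : 0 < M) : 2*M ≤ resX m M := by unfold resX; linarith
lemma resX_gem (hm : 0 < m) (hM : 0 < M) : m ≤ resX m M := by unfold resX; linarith
lemma resX_ge32M (hm : 0 < m) (hM : 0 < M) : 32*M ≤ resX m M := by unfold resX; linarith
lemma resX_geMm (hm : 0 < m) (hM : 0 < M) : 2*M + m ≤ resX m M := by unfold resX; linarith

lemma resC_pos (hm : 0 < m) (hmM : m < 2*M) : 0 < resC m M := by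
  have hM : 0 < M := by linarith
  have hX : 0 < resX m M := resX_pos hm hM
  have h4 : 0 < 4*M^2 - m^2 := by nlinarith
  unfold resC
  refine lt_min one_pos <| lt_min (by positivity) <| lt_min (by positivity) <|
    lt_min (by positivity) <| lt_min (by positivity) <| lt_min (by positivity) (by positivity)

lemma resC_le_one : resC m M ≤ 1 := min_le_left _ _
lemma resC_le₁ : resC m M ≤ m^2/(2*resX m M + m) :=
  le_trans (min_le_right _ _) (min_le_left _ _)
lemma resC_le₂ : resC m M ≤ m^2/(4+m) :=
  le_trans (min_le_right _ _) <| le_trans (min_le_right _ _) (min_le_left _ _)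
lemma resC_le₃ : resC m M ≤ M^2/(3*(2+M)) :=
  le_trans (min_le_right _ _) <| le_trans (min_le_right _ _) <|
    le_trans (min_le_right _ _) (min_le_left _ _)
lemma resC_le₄ : resC m M ≤ M^2/(2*(2+M)) :=
  le_trans (min_le_right _ _) <| le_trans (min_le_right _ _) <|
    le_trans (min_le_right _ _) <| le_trans (min_le_right _ _) (min_le_left _ _)
lemma resC_le₅ : resC m M ≤ (4*M^2-m^2)/(2*resX m M + 2*M + m) :=
  le_trans (min_le_right _ _) <| le_trans (min_le_right _ _) <|
    le_trans (min_le_right _ _) <| le_trans (min_le_right _ _) <|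
      le_trans (min_le_right _ _) (min_le_left _ _)
lemma resC_le₆ : resC m M ≤ (4*M^2-m^2)/24 :=
  le_trans (min_le_right _ _) <| le_trans (min_le_right _ _) <|
    le_trans (min_le_right _ _) <| le_trans (min_le_right _ _) <|
      le_trans (min_le_right _ _) (min_le_right _ _)

lemma resC_le_m (hm : 0 < m) (hM : 0 < M) : resC m M ≤ m := by
  refine le_trans resC_le₁ ?_
  have hX : 0 < resX m M := resX_pos hm hM
  rw [div_le_iff₀ (by linarith)]
  nlinarith

/-- `a ≤ b` from `a² ≤ b²`. -/
lemma le_of_sq_le {a b : ℝ} (ha : 0 ≤ a) (hb : 0 ≤ b) (h : a^2 ≤ b^2) : a ≤ b := by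
  nlinarith

set_option maxHeartbeats 2000000 in
/-- Algebraic core for the case `s₁ = s₂`. -/
lemma res_pp_core (x y z A B C N K : ℝ) (hm : 0 < m) (hM : 0 < M)
    (hx : 0 ≤ x) (hy : 0 ≤ y) (hz : 0 ≤ z) (h1 : z ≤ x + y) (h2 : x ≤ y + z)
    (hA2 : A^2 = x^2+m^2) (hB2 : B^2 = y^2+M^2) (hC2 : C^2 = z^2+M^2)
    (hA0 : 0 < A) (hB0 : 0 < B) (hC0 : 0 < C)
    (hNdef : N = min x (min y z)) (hKdef : K = max 1 N) :
    resC m M ≤ (A + B - C) * K := by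
  have hAx : x ≤ A := le_of_sq_le hx hA0.le (by nlinarith)
  have hAm : m ≤ A := le_of_sq_le hm.le hA0.le (by nlinarith)
  have hAxm : A ≤ x + m := le_of_sq_le hA0.le (by linarith) (by nlinarith)
  have hBy : y ≤ B := le_of_sq_le hy hB0.le (by nlinarith)
  have hBM : M ≤ B := le_of_sq_le hM.le hB0.le (by nlinarith)
  have hByM : B ≤ y + M := le_of_sq_le hB0.le (by linarith) (by nlinarith)
  have hCz : z ≤ C := le_of_sq_le hz hC0.le (by nlinarith)
  have hCM : M ≤ C := le_of_sq_le hM.le hC0.le (by nlinarith)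
  have hCzM : C ≤ z + M := le_of_sq_le hC0.le (by linarith) (by nlinarith)
  have hK1 : 1 ≤ K := hKdef ▸ le_max_left _ _
  have hKN : N ≤ K := hKdef ▸ le_max_right _ _
  have hK0 : 0 < K := lt_of_lt_of_le one_pos hK1
  have hNx : N ≤ x := hNdef ▸ min_le_left _ _
  have hNy : N ≤ y := hNdef ▸ le_trans (min_le_right _ _) (min_le_left _ _)
  have hNz : N ≤ z := hNdef ▸ le_trans (min_le_right _ _) (min_le_right _ _)
  have hX8 : 8 ≤ resX m M := resX_ge8 hm hM
  have hXM : 2*M ≤ resX m M := resX_geM hm hM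
  have hXm : m ≤ resX m M := resX_gem hm hM
  rcases le_or_gt z y with hzy | hyz
  · -- C ≤ B, so f ≥ A ≥ m
    have hCB : C ≤ B := le_of_sq_le hC0.le hB0.le (by clear * - hB2 hC2 hzy hy hz; nlinarith)
    have hfm : m ≤ A + B - C := by linarith
    have h1' : resC m M ≤ m := resC_le_m hm hM
    have h2' : m * 1 ≤ (A + B - C) * K := mul_le_mul hfm hK1 zero_le_one (by linarith)
    linarith
  · -- y < z
    have hCBx : C - B ≤ x := by
      clear * - hB2 hC2 hB0 hC0 h1 hx hy hz hBy hCz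
      nlinarith [mul_nonneg hx (by linarith : (0:ℝ) ≤ z + y)]
    have hf0 : 0 ≤ A + B - C := by linarith
    have hfK : (A + B - C) ≤ (A + B - C) * K := by
      clear * - hf0 hK1; nlinarith
    rcases le_or_gt x (resX m M) with hxX | hxX
    · -- small x
      have key : m^2 ≤ (A + B - C) * (2*resX m M+m) := by
        clear * - hA2 hAx hAxm hCBx hf0 hxX hX8 hm hx
        nlinarith [mul_nonneg (by linarith : (0:ℝ) ≤ A - x) (by linarith : (0:ℝ) ≤ 2*resX m M + m - (A+x))]
      have h1' : resC m M ≤ m^2/(2*resX m M+m) := resC_le₁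
      rw [le_div_iff₀ (by linarith : (0:ℝ) < 2*resX m M+m)] at h1'
      have : resC m M ≤ A + B - C := le_of_mul_le_mul_right
        (by linarith : resC m M * (2*resX m M+m) ≤ (A+B-C) * (2*resX m M+m))
        (by linarith : (0:ℝ) < 2*resX m M+m)
      linarith
    · rcases le_or_gt x (2*N) with hxN | hxN
      · -- N ≥ x/2
        have hAxK : A + x ≤ (4+m)*K := by
          clear * - hAxm hxN hKN hK1 hm
          nlinarith [mul_nonneg hm.le (by linarith : (0:ℝ) ≤ K - 1)]
        have key : m^2 ≤ ((A + B - C) * K) * (4+m) := by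
          clear * - hA2 hAx hAxK hCBx hf0 hK0 hK1 hm hx
          nlinarith [mul_nonneg (by linarith : (0:ℝ) ≤ A - x) (by linarith : (0:ℝ) ≤ (4+m)*K - (A+x)),
            mul_nonneg (by linarith : (0:ℝ) ≤ A + B - C) (by linarith : (0:ℝ) ≤ K)]
        have h1' : resC m M ≤ m^2/(4+m) := resC_le₂
        rw [le_div_iff₀ (by linarith : (0:ℝ) < 4+m)] at h1'
        exact le_of_mul_le_mul_right (by linarith) (by linarith : (0:ℝ) < 4+m)
      · -- N = y, 2y < x
        have hNy' : N = y := by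
          have hyx : y ≤ x := by
            by_contra hcon
            push_neg at hcon
            have : N = x := by
              rw [hNdef, min_eq_left (le_min (le_of_lt hcon) (by linarith))]
            linarith
          rw [hNdef, min_eq_left hyz.le, min_eq_right hyx]
        have hyx2 : 2*y < x := hNy' ▸ hxN
        have hx0 : 0 < x := by linarith
        have hBC3x : B + C ≤ 3*x := by linarith
        have h6 : x*(B+C-y-z) ≤ (A+B-C)*(B+C) := by
          clear * - hB2 hC2 hAx hBy hCz hx hy hz h1 hf0 hB0 hC0
          nlinarith [mul_nonneg hx (by linarith : (0:ℝ) ≤ z + y),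
            mul_nonneg (by linarith : (0:ℝ) ≤ A - x) (by linarith : (0:ℝ) ≤ B + C)]
        have h7 : M^2 ≤ (B-y)*(2*y+M) := by
          clear * - hB2 hBy hByM hy hM
          nlinarith [mul_nonneg (by linarith : (0:ℝ) ≤ B - y) (by linarith : (0:ℝ) ≤ 2*y+M - (B+y))]
        have h8 : x*(B-y) ≤ x*((A+B-C)*3) := by
          clear * - h6 hBC3x hCz hf0 hx0 hBy hy
          nlinarith [mul_nonneg hf0 (by linarith : (0:ℝ) ≤ 3*x - (B+C))]
        have h10 : B - y ≤ (A+B-C)*3 := le_of_mul_le_mul_left h8 hx0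
        have h11 : 2*y + M ≤ (2+M)*K := by
          clear * - hNy' hKN hK1 hM
          nlinarith [mul_nonneg hM.le (by linarith : (0:ℝ) ≤ K - 1)]
        have key : M^2 ≤ ((A+B-C)*K)*(3*(2+M)) := by
          clear * - h7 h10 h11 hf0 hK0 hBy hM hy hK1
          nlinarith [mul_nonneg (by linarith : (0:ℝ) ≤ B - y) (by linarith : (0:ℝ) ≤ (2+M)*K - (2*y+M)),
            mul_nonneg (by linarith : (0:ℝ) ≤ (A+B-C)*3 - (B-y)) (by linarith : (0:ℝ) ≤ ((2+M)*K)),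
            mul_pos hK0 (by linarith : (0:ℝ) < 2+M)]
        have h1' : resC m M ≤ M^2/(3*(2+M)) := resC_le₃
        rw [le_div_iff₀ (by linarith : (0:ℝ) < 3*(2+M))] at h1'
        exact le_of_mul_le_mul_right (by linarith) (by linarith : (0:ℝ) < 3*(2+M))

set_option maxHeartbeats 2000000 in
/-- Algebraic core for the case `s₁ = -1, s₂ = 1` (assuming `y ≤ z`). -/
lemma res_mp_core (x y z A B C E N K : ℝ) (hm : 0 < m) (hmM : m < 2*M)
    (hx : 0 ≤ x) (hy : 0 ≤ y) (hz : 0 ≤ z) (hyz : y ≤ z) (h2 : x ≤ y + z)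
    (hA2 : A^2 = x^2+m^2) (hB2 : B^2 = y^2+M^2) (hC2 : C^2 = z^2+M^2)
    (hE2 : E^2 = x^2+(2*M)^2)
    (hA0 : 0 < A) (hB0 : 0 < B) (hC0 : 0 < C) (hE0 : 0 < E)
    (hNdef : N = min x (min y z)) (hKdef : K = max 1 N) :
    resC m M ≤ (B + C - A) * K := by
  have hM : 0 < M := by linarith
  have hm2 : m^2 < 4*M^2 := by nlinarith
  have hAx : x ≤ A := le_of_sq_le hx hA0.le (by nlinarith)
  have hAm : m ≤ A := le_of_sq_le hm.le hA0.le (by nlinarith)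
  have hAxm : A ≤ x + m := le_of_sq_le hA0.le (by linarith) (by nlinarith)
  have hBy : y ≤ B := le_of_sq_le hy hB0.le (by nlinarith)
  have hBM : M ≤ B := le_of_sq_le hM.le hB0.le (by nlinarith)
  have hByM : B ≤ y + M := le_of_sq_le hB0.le (by linarith) (by nlinarith)
  have hCz : z ≤ C := le_of_sq_le hz hC0.le (by nlinarith)
  have hCM : M ≤ C := le_of_sq_le hM.le hC0.le (by nlinarith)
  have hCzM : C ≤ z + M := le_of_sq_le hC0.le (by linarith) (by nlinarith)
  have hEx : x ≤ E := le_of_sq_le hx hE0.le (by nlinarith)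
  have hExm : E ≤ x + 2*M := le_of_sq_le hE0.le (by linarith) (by nlinarith)
  have hK1 : 1 ≤ K := hKdef ▸ le_max_left _ _
  have hKN : N ≤ K := hKdef ▸ le_max_right _ _
  have hK0 : 0 < K := lt_of_lt_of_le one_pos hK1
  have hNx : N ≤ x := hNdef ▸ min_le_left _ _
  have hNy : N ≤ y := hNdef ▸ le_trans (min_le_right _ _) (min_le_left _ _)
  have hX8 : 8 ≤ resX m M := resX_ge8 hm hM
  have hXM : 2*M ≤ resX m M := resX_geM hm hM
  have hXm : m ≤ resX m M := resX_gem hm hM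
  have hX32 : 32*M ≤ resX m M := resX_ge32M hm hM
  have hXMm : 2*M + m ≤ resX m M := resX_geMm hm hM
  -- Minkowski: E ≤ B + C
  have hBC2 : (B*C)^2 = (y^2+M^2)*(z^2+M^2) := by rw [mul_pow, hB2, hC2]
  have hBC : y*z + M^2 ≤ B*C := by
    clear * - hBC2 hB0 hC0 hy hz hM
    nlinarith [mul_pos hB0 hC0, sq_nonneg (y-z), sq_nonneg (B*C + (y*z+M^2))]
  have hEBC : E ≤ B + C := by
    refine le_of_sq_le hE0.le (by linarith) ?_
    clear * - hE2 hB2 hC2 hBC h2 hx hy hz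
    nlinarith
  have hEA : 0 < E - A := by
    clear * - hE2 hA2 hm2 hA0 hE0
    nlinarith
  have hg0 : 0 < B + C - A := by linarith
  rcases le_or_gt x (resX m M) with hxX | hxX
  · -- small x
    have key : 4*M^2 - m^2 ≤ (B + C - A) * (2*resX m M + 2*M + m) := by
      clear * - hE2 hA2 hEA hg0 hExm hAxm hxX hX8 hm hM hx hEBC hAx hEx
      nlinarith [mul_nonneg hEA.le (by linarith : (0:ℝ) ≤ 2*resX m M + 2*M + m - (E+A)),
        mul_nonneg (by linarith : (0:ℝ) ≤ B + C - A - (E - A)) (by linarith : (0:ℝ) ≤ 2*resX m M + 2*M + m)]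
    have h1' : resC m M ≤ (4*M^2-m^2)/(2*resX m M + 2*M + m) := resC_le₅
    rw [le_div_iff₀ (by linarith : (0:ℝ) < 2*resX m M + 2*M + m)] at h1'
    have hgK : (B + C - A) ≤ (B + C - A) * K := by clear * - hg0 hK1; nlinarith
    have : resC m M ≤ B + C - A := le_of_mul_le_mul_right (by linarith) (by linarith : (0:ℝ) < 2*resX m M + 2*M + m)
    linarith
  · rcases le_or_gt x (8*y) with hxy8 | hxy8
    · -- N ≥ x/8
      have h8N : x ≤ 8*N := by
        rw [hNdef, min_eq_left hyz]
        rcases le_total x y with h | h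
        · rw [min_eq_left h]; linarith
        · rw [min_eq_right h]; linarith
      have hEAK : E + A ≤ 24*K := by
        clear * - hExm hAxm hxX hXMm h8N hKN hK1 hm hM hx
        nlinarith
      have key : 4*M^2 - m^2 ≤ ((B + C - A)*K) * 24 := by
        clear * - hE2 hA2 hEA hg0 hEAK hEBC hK0 hK1
        nlinarith [mul_nonneg hEA.le (by linarith : (0:ℝ) ≤ 24*K - (E+A)),
          mul_nonneg (by linarith : (0:ℝ) ≤ B + C - A - (E - A)) (by linarith : (0:ℝ) ≤ 24*K)]
      have h1' : resC m M ≤ (4*M^2-m^2)/24 := resC_le₆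
      rw [le_div_iff₀ (by norm_num : (0:ℝ) < 24)] at h1'
      exact le_of_mul_le_mul_right (by linarith) (by norm_num : (0:ℝ) < (24:ℝ))
    · -- 8y < x : N = y
      have hyx : y < x := by linarith
      have hNy' : N = y := by
        rw [hNdef, min_eq_left hyz, min_eq_right hyx.le]
      have hx0 : 0 < x := by linarith
      have hzxy : x - y ≤ z := by linarith
      have hS : 2*x - y ≤ C + A := by linarith
      have hS0 : 0 < C + A := by linarith
      have hz2 : (x-y)^2 ≤ z^2 := by
        clear * - hzxy hyx hy; nlinarith
      -- (y + C - A)*(C+A) ≥ M² - m²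
      have h10 : M^2 - m^2 ≤ (y + C - A)*(C+A) := by
        clear * - hz2 hC2 hA2 hS hy hS0
        nlinarith [mul_le_mul_of_nonneg_left hS hy]
      have hBy7 : M^2 ≤ (B-y)*(2*y+M) := by
        clear * - hB2 hBy hByM hy hM
        nlinarith [mul_nonneg (by linarith : (0:ℝ) ≤ B - y) (by linarith : (0:ℝ) ≤ 2*y+M - (B+y))]
      have hBy0 : 0 ≤ B - y := by linarith
      have hS15 : 15*x ≤ 8*(C+A) := by linarith
      have h15 : 96*y + 48*M ≤ 15*x := by linarith
      have h12 : 48*M^2 ≤ (B-y)*(8*(C+A)) := by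
        clear * - hBy7 hBy0 hS15 h15
        nlinarith [mul_nonneg hBy0 (by linarith : (0:ℝ) ≤ 8*(C+A) - (96*y + 48*M))]
      have h14 : (-((B-y)/2))*(C+A) ≤ (y+C-A)*(C+A) := by
        clear * - h10 h12 hm2
        nlinarith
      have h16 : -((B-y)/2) ≤ y + C - A := le_of_mul_le_mul_right h14 hS0
      have hgB2 : (B-y)/2 ≤ B + C - A := by linarith
      have hg0' : 0 ≤ B + C - A := by linarith
      have h11 : 2*y + M ≤ (2+M)*K := by
        clear * - hNy' hKN hK1 hM
        nlinarith [mul_nonneg hM.le (by linarith : (0:ℝ) ≤ K - 1)]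
      have key : M^2 ≤ ((B+C-A)*K)*(2*(2+M)) := by
        clear * - hBy7 hgB2 h11 hg0' hK0 hK1 hBy0 hM hy
        nlinarith [mul_nonneg hBy0 (by linarith : (0:ℝ) ≤ (2+M)*K - (2*y+M)),
          mul_nonneg (by linarith : (0:ℝ) ≤ 2*(B+C-A) - (B-y)) (by linarith : (0:ℝ) ≤ (2+M)*K),
          mul_pos hK0 (by linarith : (0:ℝ) < 2+M)]
      have h1' : resC m M ≤ M^2/(2*(2+M)) := resC_le₄
      rw [le_div_iff₀ (by linarith : (0:ℝ) < 2*(2+M))] at h1'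
      exact le_of_mul_le_mul_right (by linarith) (by linarith : (0:ℝ) < 2*(2+M))

set_option maxHeartbeats 1000000 in
/-- The scalar resonance estimate, all sign cases. -/
lemma res_scalar (hm : 0 < m) (hmM : m < 2*M) (s₁ s₂ : ℝ)
    (hs₁ : s₁ = 1 ∨ s₁ = -1) (hs₂ : s₂ = 1 ∨ s₂ = -1) (x y z : ℝ)
    (hx : 0 ≤ x) (hy : 0 ≤ y) (hz : 0 ≤ z)
    (h1 : z ≤ x + y) (h2 : x ≤ y + z) (h3 : y ≤ x + z) :
    resC m M / max 1 (min x (min y z)) ≤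
      |Real.sqrt (x^2+m^2) + s₁ * Real.sqrt (y^2+M^2) - s₂ * Real.sqrt (z^2+M^2)| := by
  have hM : 0 < M := by linarith
  have hK0 : (0:ℝ) < max 1 (min x (min y z)) := lt_of_lt_of_le one_pos (le_max_left _ _)
  rw [div_le_iff₀ hK0]
  have hA2 : (Real.sqrt (x^2+m^2))^2 = x^2+m^2 := Real.sq_sqrt (by positivity)
  have hB2 : (Real.sqrt (y^2+M^2))^2 = y^2+M^2 := Real.sq_sqrt (by positivity)
  have hC2 : (Real.sqrt (z^2+M^2))^2 = z^2+M^2 := Real.sq_sqrt (by positivity)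
  have hE2 : (Real.sqrt (x^2+(2*M)^2))^2 = x^2+(2*M)^2 := Real.sq_sqrt (by positivity)
  have hA0 : 0 < Real.sqrt (x^2+m^2) := Real.sqrt_pos.2 (by positivity)
  have hB0 : 0 < Real.sqrt (y^2+M^2) := Real.sqrt_pos.2 (by positivity)
  have hC0 : 0 < Real.sqrt (z^2+M^2) := Real.sqrt_pos.2 (by positivity)
  have hE0 : 0 < Real.sqrt (x^2+(2*M)^2) := Real.sqrt_pos.2 (by positivity)
  set A := Real.sqrt (x^2+m^2)
  set B := Real.sqrt (y^2+M^2)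
  set C := Real.sqrt (z^2+M^2)
  set E := Real.sqrt (x^2+(2*M)^2)
  rcases hs₁ with rfl | rfl <;> rcases hs₂ with rfl | rfl
  · -- (1,1)
    have h := res_pp_core x y z A B C _ _ hm hM hx hy hz h1 h2 hA2 hB2 hC2 hA0 hB0 hC0 rfl rfl
    refine le_trans h (mul_le_mul_of_nonneg_right ?_ hK0.le)
    have : A + 1*B - 1*C = A + B - C := by ring
    rw [this]
    exact le_abs_self _
  · -- (1,-1)
    have hm' : m ≤ A + 1*B - (-1)*C := by
      have : m ≤ A := le_of_sq_le hm.le hA0.le (by nlinarith)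
      nlinarith
    have h1' : resC m M ≤ m := resC_le_m hm hM
    have h2' : m * 1 ≤ (A + 1*B - (-1)*C) * max 1 (min x (min y z)) :=
      mul_le_mul hm' (le_max_left _ _) zero_le_one (by linarith)
    refine le_trans (by linarith) (mul_le_mul_of_nonneg_right (le_abs_self _) hK0.le)
  · -- (-1,1)
    have key : resC m M ≤ (B + C - A) * max 1 (min x (min y z)) := by
      rcases le_total y z with h | h
      · exact res_mp_core x y z A B C E _ _ hm hmM hx hy hz h h2 hA2 hB2 hC2 hE2
          hA0 hB0 hC0 hE0 rfl rfl
      · have := res_mp_core x z y A C B E _ _ hm hmM hx hz hy h (by linarith) hA2 hC2 hB2 hE2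
          hA0 hC0 hB0 hE0 (by rw [min_comm z y]) rfl
        linarith [this]
    refine le_trans key (mul_le_mul_of_nonneg_right ?_ hK0.le)
    have : |A + (-1)*B - 1*C| = |B + C - A| := by
      rw [show A + (-1)*B - 1*C = -(B + C - A) by ring, abs_neg]
    rw [this]
    exact le_abs_self _
  · -- (-1,-1)
    have h := res_pp_core x z y A C B _ _ hm hM hx hz hy h3 (by linarith) hA2 hC2 hB2
      hA0 hC0 hB0 (by rw [min_comm z y]) rfl
    refine le_trans h (mul_le_mul_of_nonneg_right ?_ hK0.le)
    have : A + (-1)*B - (-1)*C = A + C - B := by ring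
    rw [this]
    exact le_abs_self _

/-- The constant `c` in the final theorem. -/
def resc (m M : ℝ) : ℝ := 6 + Real.logb 2 (1/(resC m M))

lemma resc_pos (hm : 0 < m) (hmM : m < 2*M) : 0 < resc m M := by
  have h0 := resC_pos hm hmM
  have h1 : (1:ℝ) ≤ 1/(resC m M) := by
    rw [le_div_iff₀ h0]; simpa using resC_le_one (m := m) (M := M)
  have := Real.logb_nonneg (by norm_num : (1:ℝ) < 2) h1
  unfold resc; linarith

lemma spatial_add (P Q : SpaceTime) : spatial (P+Q) = spatial P + spatial Q := by
  ext i; simp [spatial]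

set_option maxHeartbeats 1000000 in
lemma resonance_region (hm : 0 < m) (hmM : m < 2*M) (s₁ s₂ : ℝ)
    (hs₁ : s₁ = 1 ∨ s₁ = -1) (hs₂ : s₂ = 1 ∨ s₂ = -1)
    (k k₁ k₂ : ℕ) (j j₁ j₂ : ℤ) (P Q : SpaceTime)
    (hP : P ∈ kgRegion m 1 k j) (hQ : Q ∈ kgRegion M s₁ k₁ j₁)
    (hR : P + Q ∈ kgRegion M s₂ k₂ j₂)
    (hj : ((max j (max j₁ j₂) : ℤ) : ℝ) ≤ -(min (k : ℝ) (min (k₁ : ℝ) (k₂ : ℝ))) - resc m M) :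
    False := by
  have hM : 0 < M := by linarith
  obtain ⟨hP1, -, -, hP4⟩ := hP
  obtain ⟨hQ1, -, -, hQ4⟩ := hQ
  obtain ⟨hR1, -, -, hR4⟩ := hR
  set x := ‖spatial P‖ with hxdef
  set y := ‖spatial Q‖ with hydef
  set z := ‖spatial (P+Q)‖ with hzdef
  have hx : 0 ≤ x := norm_nonneg _
  have hy : 0 ≤ y := norm_nonneg _
  have hz : 0 ≤ z := norm_nonneg _
  have h1 : z ≤ x + y := by rw [hxdef, hydef, hzdef, spatial_add]; exact norm_add_le _ _
  have h2 : x ≤ y + z := by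
    have : spatial P = spatial (P+Q) - spatial Q := by rw [spatial_add]; abel
    rw [hxdef, this]
    calc ‖spatial (P+Q) - spatial Q‖ ≤ z + y := norm_sub_le _ _
    _ = y + z := by ring
  have h3 : y ≤ x + z := by
    have : spatial Q = spatial (P+Q) - spatial P := by rw [spatial_add]; abel
    rw [hydef, this]
    calc ‖spatial (P+Q) - spatial P‖ ≤ z + x := norm_sub_le _ _
    _ = x + z := by ring
  -- the resonance function
  set A := jbracket m (spatial P) with hAdef
  set B := jbracket M (spatial Q) with hBdef
  set C := jbracket M (spatial (P+Q)) with hCdef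
  have hPQ0 : (P+Q) 0 = P 0 + Q 0 := rfl
  set jx := max j (max j₁ j₂) with hjxdef
  have hjj : j ≤ jx := le_max_left _ _
  have hjj₁ : j₁ ≤ jx := le_trans (le_max_left _ _) (le_max_right _ _)
  have hjj₂ : j₂ ≤ jx := le_trans (le_max_right _ _) (le_max_right _ _)
  have hmono : ∀ i : ℤ, i ≤ jx → (2:ℝ)^(i+2) ≤ (2:ℝ)^(jx+2) := fun i hi => by
    apply zpow_le_zpow_right₀ one_le_two; omega
  have habs : |A + s₁*B - s₂*C| ≤ 3 * (2:ℝ)^(jx+2) := by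
    have hid : A + s₁*B - s₂*C
        = (P 0 + 1*A) + (Q 0 + s₁*B) - ((P+Q) 0 + s₂*C) := by rw [hPQ0]; ring
    rw [hid]
    calc |(P 0 + 1*A) + (Q 0 + s₁*B) - ((P+Q) 0 + s₂*C)|
        ≤ |(P 0 + 1*A) + (Q 0 + s₁*B)| + |(P+Q) 0 + s₂*C| := abs_sub _ _
      _ ≤ |P 0 + 1*A| + |Q 0 + s₁*B| + |(P+Q) 0 + s₂*C| := by
          linarith [abs_add_le (P 0 + 1*A) (Q 0 + s₁*B)]
      _ ≤ 3 * (2:ℝ)^(jx+2) := by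
          linarith [hmono j hjj, hmono j₁ hjj₁, hmono j₂ hjj₂, hP4, hQ4, hR4]
  -- the scalar lower bound
  have hsc : resC m M / max 1 (min x (min y z)) ≤ |A + s₁*B - s₂*C| := by
    have hA : A = Real.sqrt (x^2+m^2) := rfl
    have hB : B = Real.sqrt (y^2+M^2) := rfl
    have hC : C = Real.sqrt (z^2+M^2) := rfl
    rw [hA, hB, hC]
    exact res_scalar hm hmM s₁ s₂ hs₁ hs₂ x y z hx hy hz h1 h2 h3
  -- bound on K
  set kn := min k (min k₁ k₂) with hkndef
  have hKbound : max 1 (min x (min y z)) ≤ (2:ℝ)^((kn:ℝ)+2) := by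
    have h2k : ∀ i : ℕ, kn ≤ i → ((2:ℝ)^(i+2:ℕ) ≤ (2:ℝ)^((kn:ℝ)+2) → True) := fun _ _ _ => trivial
    have hone : (1:ℝ) ≤ (2:ℝ)^((kn:ℝ)+2) :=
      Real.one_le_rpow one_le_two (by positivity)
    refine max_le hone ?_
    have hkcase : kn = k ∨ kn = k₁ ∨ kn = k₂ := by omega
    have hpow : ∀ i : ℕ, kn = i → (2:ℝ)^(i+2:ℕ) = (2:ℝ)^((kn:ℝ)+2) := by
      intro i hi
      rw [← hi, ← Real.rpow_natCast 2 (kn+2)]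
      norm_num
    rcases hkcase with hk | hk | hk
    · calc min x (min y z) ≤ x := min_le_left _ _
        _ ≤ (2:ℝ)^(k+2:ℕ) := hP1
        _ = _ := hpow k hk
    · calc min x (min y z) ≤ y := le_trans (min_le_right _ _) (min_le_left _ _)
        _ ≤ (2:ℝ)^(k₁+2:ℕ) := hQ1
        _ = _ := hpow k₁ hk
    · calc min x (min y z) ≤ z := le_trans (min_le_right _ _) (min_le_right _ _)
        _ ≤ (2:ℝ)^(k₂+2:ℕ) := hR1
        _ = _ := hpow k₂ hk
  have hK0 : (0:ℝ) < max 1 (min x (min y z)) := lt_of_lt_of_le one_pos (le_max_left _ _)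
  have hc0 : 0 < resC m M := resC_pos hm hmM
  -- combine
  have hcomb : resC m M / (2:ℝ)^((kn:ℝ)+2) ≤ 3 * (2:ℝ)^(jx+2) :=
    le_trans (div_le_div_of_nonneg_left hc0.le hK0 hKbound) (le_trans hsc habs)
  have hpowpos : (0:ℝ) < (2:ℝ)^((kn:ℝ)+2) := Real.rpow_pos_of_pos two_pos _
  rw [div_le_iff₀ hpowpos] at hcomb
  -- convert zpow to rpow and combine exponents
  have hzp : (2:ℝ)^(jx+2) = (2:ℝ)^(((jx:ℝ))+2) := by
    rw [← Real.rpow_intCast 2 (jx+2)]; push_cast; ring_nf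
  rw [hzp, mul_assoc, ← Real.rpow_add two_pos] at hcomb
  -- exponent bound
  have hexp : ((jx:ℝ)+2) + ((kn:ℝ)+2) ≤ -(2:ℝ) - Real.logb 2 (1/(resC m M)) := by
    have hcast : ((kn:ℕ):ℝ) = min (k:ℝ) (min (k₁:ℝ) (k₂:ℝ)) := by
      rw [hkndef]; push_cast; rfl
    have h' := hj
    rw [hcast]
    unfold resc at h'
    linarith
  have hfin : (2:ℝ)^(((jx:ℝ)+2) + ((kn:ℝ)+2)) ≤ (2:ℝ)^(-(2:ℝ) - Real.logb 2 (1/(resC m M))) :=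
    Real.rpow_le_rpow_of_exponent_le one_le_two hexp
  have hval : (2:ℝ)^(-(2:ℝ) - Real.logb 2 (1/(resC m M))) = resC m M / 4 := by
    rw [Real.rpow_sub (by norm_num : (0:ℝ) < 2),
      Real.rpow_logb (by norm_num) (by norm_num) (by positivity : (0:ℝ) < 1/(resC m M))]
    rw [show (-(2:ℝ)) = ((-2 : ℤ) : ℝ) by norm_num, Real.rpow_intCast, one_div, div_inv_eq_mul]
    have h4 : (2:ℝ)^(-2:ℤ) = 1/4 := by norm_num
    rw [h4]; ring
  rw [hval] at hfin
  nlinarith [hcomb, hfin, hc0]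

lemma fourier_eq_spacetimeFT (v : SpaceTime → ℂ) (w : SpaceTime) :
    𝓕 v w = spacetimeFT v ((2*Real.pi) • w) := by
  rw [Real.fourier_eq']
  unfold spacetimeFT
  refine integral_congr_ae (Filter.Eventually.of_forall fun z => ?_)
  beta_reduce
  rw [smul_eq_mul]
  congr 1
  rw [real_inner_smul_right]
  push_cast
  ring_nf

/-- The elementary exponential kernel. -/
def eker (a z : SpaceTime) : ℂ := Complex.exp (((2*Real.pi*⟪a,z⟫ : ℝ) : ℂ) * Complex.I)

lemma eker_add (a b z : SpaceTime) : eker a z * eker b z = eker (a+b) z := by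
  unfold eker
  rw [← Complex.exp_add]
  congr 1
  rw [inner_add_left]
  push_cast
  ring

lemma eker_norm (a z : SpaceTime) : ‖eker a z‖ = 1 := by
  unfold eker
  exact Complex.norm_exp_ofReal_mul_I _

attribute [fun_prop] Continuous.inner

@[fun_prop] lemma Continuous.starRingEnd' {X : Type*} [TopologicalSpace X] {f : X → ℂ}
    (hf : Continuous f) : Continuous fun x => (starRingEnd ℂ) (f x) :=
  continuous_star.comp hf

/-- The inner integrand of the double-integral representation. -/
def Phi (f g h : SchwartzMap SpaceTime ℂ) (z : SpaceTime) (p : SpaceTime × SpaceTime) : ℂ :=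
  (eker p.1 z * 𝓕 ⇑f p.1) * (eker p.2 z * 𝓕 ⇑g p.2) * (starRingEnd ℂ) (h z)

set_option maxHeartbeats 4000000 in
/-- If the convolution-type product of the Fourier transforms vanishes identically,
the triple integral vanishes. -/
lemma triple_integral_zero (f g h : SchwartzMap SpaceTime ℂ)
    (H : ∀ a b : SpaceTime, 𝓕 ⇑f a * 𝓕 ⇑g b * (starRingEnd ℂ) (𝓕 ⇑h (a+b)) = 0) :
    ∫ z : SpaceTime, f z * g z * (starRingEnd ℂ) (h z) = 0 := by
  have hF : Integrable (𝓕 ⇑f) volume := by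
    have := (fourierTransformCLM ℂ (V := SpaceTime) f).integrable (μ := volume)
    rwa [fourierTransformCLM_apply] at this
  have hG : Integrable (𝓕 ⇑g) volume := by
    have := (fourierTransformCLM ℂ (V := SpaceTime) g).integrable (μ := volume)
    rwa [fourierTransformCLM_apply] at this
  have hFc : Continuous (𝓕 ⇑f) := by
    have := (fourierTransformCLM ℂ (V := SpaceTime) f).continuous
    rwa [fourierTransformCLM_apply] at this
  have hGc : Continuous (𝓕 ⇑g) := by
    have := (fourierTransformCLM ℂ (V := SpaceTime) g).continuous
    rwa [fourierTransformCLM_apply] at this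
  -- Fourier inversion
  have hinvf : ∀ z, f z = ∫ a : SpaceTime, eker a z * (𝓕 ⇑f a) := by
    intro z
    have h1 : 𝓕⁻ (𝓕 ⇑f) = ⇑f := Continuous.fourierInv_fourier_eq f.continuous f.integrable hF
    conv_lhs => rw [← h1]
    rw [Real.fourierInv_eq']
    refine integral_congr_ae (Filter.Eventually.of_forall fun a => ?_)
    beta_reduce
    rw [smul_eq_mul]
    rfl
  have hinvg : ∀ z, g z = ∫ a : SpaceTime, eker a z * (𝓕 ⇑g a) := by
    intro z
    have h1 : 𝓕⁻ (𝓕 ⇑g) = ⇑g := Continuous.fourierInv_fourier_eq g.continuous g.integrable hG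
    conv_lhs => rw [← h1]
    rw [Real.fourierInv_eq']
    refine integral_congr_ae (Filter.Eventually.of_forall fun a => ?_)
    beta_reduce
    rw [smul_eq_mul]
    rfl
  -- integrability of the big integrand
  have hG2 : Integrable (fun p : SpaceTime × SpaceTime => ‖𝓕 ⇑f p.1‖ * ‖𝓕 ⇑g p.2‖) volume := by
    have : Integrable (fun p : SpaceTime × SpaceTime => ‖𝓕 ⇑f p.1‖ * ‖𝓕 ⇑g p.2‖)
        (volume.prod volume) := Integrable.mul_prod hF.norm hG.norm
    rwa [← Measure.volume_eq_prod] at this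
  have hbound : Integrable
      (fun q : SpaceTime × (SpaceTime × SpaceTime) =>
        ‖h q.1‖ * (‖𝓕 ⇑f q.2.1‖ * ‖𝓕 ⇑g q.2.2‖)) (volume.prod volume) :=
    Integrable.mul_prod h.integrable.norm hG2
  have hMeas : AEStronglyMeasurable (Function.uncurry (Phi f g h)) (volume.prod volume) := by
    refine Continuous.aestronglyMeasurable ?_
    unfold Function.uncurry Phi eker
    fun_prop
  have hInt : Integrable (Function.uncurry (Phi f g h)) (volume.prod volume) := by
    refine Integrable.mono' hbound hMeas ?_
    refine Filter.Eventually.of_forall fun q => ?_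
    unfold Function.uncurry Phi
    simp only [norm_mul, eker_norm, one_mul, RCLike.norm_conj]
    exact le_of_eq (by ring)
  -- main computation
  calc ∫ z : SpaceTime, f z * g z * (starRingEnd ℂ) (h z)
      = ∫ z : SpaceTime, (∫ p : SpaceTime × SpaceTime,
          (eker p.1 z * (𝓕 ⇑f p.1)) * (eker p.2 z * (𝓕 ⇑g p.2))) * (starRingEnd ℂ) (h z) := by
        refine integral_congr_ae (Filter.Eventually.of_forall fun z => ?_)
        beta_reduce
        rw [hinvf z, hinvg z, ← integral_prod_mul, ← Measure.volume_eq_prod]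
    _ = ∫ z : SpaceTime, ∫ p : SpaceTime × SpaceTime, Phi f g h z p := by
        refine integral_congr_ae (Filter.Eventually.of_forall fun z => ?_)
        beta_reduce
        exact (integral_mul_const _ _).symm
    _ = ∫ p : SpaceTime × SpaceTime, ∫ z : SpaceTime, Phi f g h z p :=
        integral_integral_swap hInt
    _ = ∫ p : SpaceTime × SpaceTime,
          (𝓕 ⇑f p.1) * (𝓕 ⇑g p.2) * (starRingEnd ℂ) (𝓕 ⇑h (p.1+p.2)) := by
        refine integral_congr_ae (Filter.Eventually.of_forall fun p => ?_)
        beta_reduce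
        have hker : ∀ z, Phi f g h z p
            = (𝓕 ⇑f p.1) * ((𝓕 ⇑g p.2) * (eker (p.1+p.2) z * (starRingEnd ℂ) (h z))) := by
          intro z
          unfold Phi
          rw [← eker_add]
          ring
        simp_rw [hker]
        rw [integral_const_mul, integral_const_mul]
        have hconj : ∀ z, eker (p.1+p.2) z * (starRingEnd ℂ) (h z)
            = (starRingEnd ℂ) (Complex.exp (((-2*Real.pi*⟪z,p.1+p.2⟫ : ℝ) : ℂ) * Complex.I) * h z) := by
          intro z
          unfold eker
          rw [map_mul, ← Complex.exp_conj, map_mul, Complex.conj_I, Complex.conj_ofReal]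
          congr 2
          rw [real_inner_comm]
          push_cast
          ring
        simp_rw [hconj]
        rw [integral_conj]
        have hFT : 𝓕 ⇑h (p.1+p.2)
            = ∫ z : SpaceTime, Complex.exp (((-2*Real.pi*⟪z,p.1+p.2⟫ : ℝ) : ℂ) * Complex.I) * h z := by
          rw [Real.fourier_eq']
          refine integral_congr_ae (Filter.Eventually.of_forall fun z => ?_)
          beta_reduce
          rw [smul_eq_mul]
        rw [← hFT]
        ring
    _ = 0 := by simp only [H, integral_zero]

/-- If all modulations are far below `2^{−min(k,k₁,k₂)}` then the trilinear integral vanishes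
(non-resonance at very small modulation). -/
theorem trilinear_vanishing_small_modulation (m M : ℝ) (hm : 0 < m) (hmM : m < 2 * M) :
    ∃ c > (0 : ℝ), ∀ s₁ s₂ : ℝ, (s₁ = 1 ∨ s₁ = -1) → (s₂ = 1 ∨ s₂ = -1) →
      ∀ k k₁ k₂ : ℕ, ∀ j j₁ j₂ : ℤ,
        ∀ φ u₁ u₂ : SchwartzMap SpaceTime ℂ,
          Function.support (spacetimeFT ⇑φ) ⊆ kgRegion m 1 k j →
          Function.support (spacetimeFT ⇑u₁) ⊆ kgRegion M s₁ k₁ j₁ →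
          Function.support (spacetimeFT ⇑u₂) ⊆ kgRegion M s₂ k₂ j₂ →
          ((max j (max j₁ j₂) : ℤ) : ℝ) ≤ -(min (k : ℝ) (min (k₁ : ℝ) (k₂ : ℝ))) - c →
          ∫ z : SpaceTime, φ z * u₁ z * (starRingEnd ℂ) (u₂ z) = 0 := by

  refine ⟨resc m M, resc_pos hm hmM, ?_⟩
  intro s₁ s₂ hs₁ hs₂ k k₁ k₂ j j₁ j₂ φ u₁ u₂ hφ hu₁ hu₂ hj
  apply triple_integral_zero
  intro a b
  by_contra hne
  have h12 := mul_ne_zero_iff.1 hne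
  have hfa : 𝓕 ⇑φ a ≠ 0 := (mul_ne_zero_iff.1 h12.1).1
  have hgb : 𝓕 ⇑u₁ b ≠ 0 := (mul_ne_zero_iff.1 h12.1).2
  have hhc : 𝓕 ⇑u₂ (a+b) ≠ 0 := by
    have := h12.2
    rw [starRingEnd_apply] at this
    exact star_ne_zero.1 this
  rw [fourier_eq_spacetimeFT] at hfa hgb hhc
  have hP : (2*Real.pi) • a ∈ kgRegion m 1 k j := hφ (Function.mem_support.2 hfa)
  have hQ : (2*Real.pi) • b ∈ kgRegion M s₁ k₁ j₁ := hu₁ (Function.mem_support.2 hgb)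
  have hR : (2*Real.pi) • a + (2*Real.pi) • b ∈ kgRegion M s₂ k₂ j₂ := by
    rw [← smul_add]
    exact hu₂ (Function.mem_support.2 hhc)
  exact resonance_region hm hmM s₁ s₂ hs₁ hs₂ k k₁ k₂ j j₁ j₂ _ _ hP hQ hR hj
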